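/- Let G be a Hausdorff topological group whose underlying Tychonoff space is an F'-space, and let H be a countable subgroup of G. Then H, with the subspace topology, is extremally disconnected: any two disjoint open subsets of H have disjoint closures in H. -/

import Mathlib

open Set Topology Pointwise

universe u v w

/-- A cozero set: the set where some continuous real-valued function is nonzero. -/
def IsCozeroSet {X : Type u} [TopologicalSpace X] (s : Set X) : Prop :=
  ∃ f : X → ℝ, Continuous f ∧ s = {x | f x ≠ 0}

/-- An F-space: any two disjoint cozero sets are completely separated. -/
def IsFSpace (X : Type u) [TopologicalSpace X] : Prop :=
  ∀ s t : Set X, IsCozeroSet s → IsCozeroSet t → Disjoint s t →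
    ∃ g : X → ℝ, Continuous g ∧ (∀ x, g x ∈ Set.Icc (0 : ℝ) 1) ∧
      (∀ x ∈ s, g x = 0) ∧ (∀ x ∈ t, g x = 1)

/-- An F'-space: any two disjoint cozero sets have disjoint closures. -/
def IsFPrimeSpace (X : Type u) [TopologicalSpace X] : Prop :=
  ∀ s t : Set X, IsCozeroSet s → IsCozeroSet t → Disjoint s t →
    Disjoint (closure s) (closure t)

/-- A basically disconnected space: the closure of every cozero set is open. -/
def IsBasicallyDisconnected (X : Type u) [TopologicalSpace X] : Prop :=
  ∀ s : Set X, IsCozeroSet s → IsOpen (closure s)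

/-- A P-space: every Gδ set is open. -/
def IsPSpace (X : Type u) [TopologicalSpace X] : Prop :=
  ∀ s : Set X, IsGδ s → IsOpen s

/-- Covering dimension at most `n`: every finite open cover has a finite open
refinement in which every point belongs to at most `n + 1` members. -/
def CovDimLE (X : Type u) [TopologicalSpace X] (n : ℕ) : Prop :=
  ∀ 𝒰 : Finset (Set X), (∀ U ∈ 𝒰, IsOpen U) → ⋃₀ (𝒰 : Set (Set X)) = Set.univ →
    ∃ 𝒱 : Finset (Set X), (∀ V ∈ 𝒱, IsOpen V) ∧ ⋃₀ (𝒱 : Set (Set X)) = Set.univ ∧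
      (∀ V ∈ 𝒱, ∃ U ∈ 𝒰, V ⊆ U) ∧
      ∀ x : X, {V : Set X | V ∈ 𝒱 ∧ x ∈ V}.ncard ≤ n + 1

/-- An ℝ-quotient map: a continuous surjection such that a real-valued function on the
target is continuous whenever its composition with the map is continuous. -/
def IsRQuotientMap {X : Type u} {Y : Type v} [TopologicalSpace X] [TopologicalSpace Y]
    (p : X → Y) : Prop :=
  Continuous p ∧ Function.Surjective p ∧ ∀ φ : Y → ℝ, Continuous (φ ∘ p) → Continuous φ

/-- A non-P-point: a point having a Gδ set around it which is not a neighborhood of it. -/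
def IsNonPPoint {X : Type u} [TopologicalSpace X] (x : X) : Prop :=
  ∃ s : Set X, IsGδ s ∧ x ∈ s ∧ s ∉ nhds x


lemma my_max_ne_zero_iff {a : ℝ} : max a 0 ≠ 0 ↔ 0 < a := by
  constructor
  · intro h
    by_contra h'
    push_neg at h'
    exact h (max_eq_right h')
  · intro h
    rw [max_eq_left h.le]
    exact h.ne'

lemma my_sep {X : Type u} [TopologicalSpace X] [CompletelyRegularSpace X] {x : X} {K : Set X}
    (hK : IsClosed K) (hx : x ∉ K) :
    ∃ f : X → ℝ, Continuous f ∧ (∀ y, f y ∈ Icc (0:ℝ) 1) ∧ f x = 1 ∧ ∀ y ∈ K, f y = 0 := by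
  obtain ⟨f, cf, hfx, hfK⟩ := CompletelyRegularSpace.completely_regular x K hK hx
  refine ⟨fun y => 1 - (f y : ℝ), by continuity, ?_, ?_, ?_⟩
  · intro y
    have h1 := (f y).2.1
    have h2 := (f y).2.2
    exact ⟨by simpa using h2, by simpa using h1⟩
  · simp [hfx]
  · intro y hy
    have := hfK hy
    simp [this]

noncomputable def myPhi {X : Type u} (f g : ℕ → X → ℝ) (x : X) : ℝ :=
  ∑' n, max (f n x - 1/2) 0 * ∏ m ∈ Finset.range (n+1), max (1/2 - g m x) 0

lemma myPhi_term_nonneg {X : Type u} (f g : ℕ → X → ℝ) (n : ℕ) (x : X) :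
    0 ≤ max (f n x - 1/2) 0 * ∏ m ∈ Finset.range (n+1), max (1/2 - g m x) 0 :=
  mul_nonneg (le_max_right _ _) (Finset.prod_nonneg fun _ _ => le_max_right _ _)

lemma myPhi_term_bound {X : Type u} {f g : ℕ → X → ℝ}
    (hfI : ∀ n y, f n y ∈ Icc (0:ℝ) 1) (hgI : ∀ n y, g n y ∈ Icc (0:ℝ) 1) (n : ℕ) (x : X) :
    ‖max (f n x - 1/2) 0 * ∏ m ∈ Finset.range (n+1), max (1/2 - g m x) 0‖ ≤ (1/2:ℝ)^n := by
  rw [Real.norm_eq_abs, abs_of_nonneg (myPhi_term_nonneg f g n x)]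
  have hA : max (f n x - 1/2) 0 ≤ 1 := by
    have := (hfI n x).2
    apply max_le <;> linarith
  have hP : (∏ m ∈ Finset.range (n+1), max (1/2 - g m x) 0) ≤ (1/2:ℝ)^(n+1) := by
    calc (∏ m ∈ Finset.range (n+1), max (1/2 - g m x) 0)
        ≤ ∏ _m ∈ Finset.range (n+1), (1/2:ℝ) := by
          apply Finset.prod_le_prod (fun _ _ => le_max_right _ _)
          intro m _
          apply max_le _ (by norm_num)
          linarith [(hgI m x).1]
      _ = (1/2:ℝ)^(n+1) := by simp
  calc max (f n x - 1/2) 0 * ∏ m ∈ Finset.range (n+1), max (1/2 - g m x) 0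
      ≤ ∏ m ∈ Finset.range (n+1), max (1/2 - g m x) 0 :=
        mul_le_of_le_one_left (Finset.prod_nonneg fun _ _ => le_max_right _ _) hA
    _ ≤ (1/2:ℝ)^(n+1) := hP
    _ ≤ (1/2:ℝ)^n := pow_le_pow_of_le_one (by norm_num) (by norm_num) (Nat.le_succ n)

lemma myPhi_continuous {X : Type u} [TopologicalSpace X] {f g : ℕ → X → ℝ}
    (hfc : ∀ n, Continuous (f n)) (hgc : ∀ n, Continuous (g n))
    (hfI : ∀ n y, f n y ∈ Icc (0:ℝ) 1) (hgI : ∀ n y, g n y ∈ Icc (0:ℝ) 1) :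
    Continuous (myPhi f g) := by
  apply continuous_tsum (u := fun n => (1/2:ℝ)^n)
  · intro n
    exact (((hfc n).sub continuous_const).max continuous_const).mul
      (continuous_finset_prod _ fun m _ => (continuous_const.sub (hgc m)).max continuous_const)
  · exact summable_geometric_of_lt_one (by norm_num) (by norm_num)
  · exact fun n x => myPhi_term_bound hfI hgI n x

lemma myPhi_ne_zero_iff {X : Type u} {f g : ℕ → X → ℝ}
    (hfI : ∀ n y, f n y ∈ Icc (0:ℝ) 1) (hgI : ∀ n y, g n y ∈ Icc (0:ℝ) 1) (x : X) :
    myPhi f g x ≠ 0 ↔ ∃ n, 1/2 < f n x ∧ ∀ m ≤ n, g m x < 1/2 := by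
  set u : ℕ → ℝ := fun n => max (f n x - 1/2) 0 * ∏ m ∈ Finset.range (n+1), max (1/2 - g m x) 0
    with hu
  have hsum : Summable u := by
    apply Summable.of_nonneg_of_le (fun n => myPhi_term_nonneg f g n x)
      (fun n => ?_) (summable_geometric_of_lt_one (by norm_num) (by norm_num) (r := 1/2))
    have := myPhi_term_bound (g := g) hfI hgI n x
    rwa [Real.norm_eq_abs, abs_of_nonneg (myPhi_term_nonneg f g n x)] at this
  have hterm : ∀ n, u n ≠ 0 ↔ (1/2 < f n x ∧ ∀ m ≤ n, g m x < 1/2) := by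
    intro n
    rw [hu]
    simp only [mul_ne_zero_iff, Finset.prod_ne_zero_iff, my_max_ne_zero_iff,
      Finset.mem_range, Nat.lt_succ_iff, sub_pos]
  constructor
  · intro h
    by_contra hc
    push_neg at hc
    apply h
    have hz : ∀ n, u n = 0 := by
      intro n
      by_contra hn
      obtain ⟨h1, h2⟩ := (hterm n).mp hn
      obtain ⟨m, hm, hm'⟩ := hc n h1
      exact absurd (h2 m hm) (not_lt.mpr hm')
    calc myPhi f g x = ∑' n, u n := rfl
      _ = ∑' _n : ℕ, (0:ℝ) := tsum_congr hz
      _ = 0 := tsum_zero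
  · rintro ⟨n, h1, h2⟩
    have hpos : 0 < u n := by
      rcases lt_or_eq_of_le (myPhi_term_nonneg f g n x) with h | h
      · exact h
      · exact absurd h.symm ((hterm n).mpr ⟨h1, h2⟩)
    have : u n ≤ myPhi f g x := Summable.le_tsum hsum n (fun m _ => myPhi_term_nonneg f g m x)
    exact (lt_of_lt_of_le hpos this).ne'

/-- Key lemma: in an F'-space, two countable sets each disjoint from the closure
of the other have disjoint closures. -/
lemma my_key {X : Type u} [TopologicalSpace X] [CompletelyRegularSpace X]
    (hF' : IsFPrimeSpace X) {s t : Set X} (hs : s.Countable) (ht : t.Countable)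
    (hst : Disjoint s (closure t)) (hts : Disjoint t (closure s)) :
    Disjoint (closure s) (closure t) := by
  rcases s.eq_empty_or_nonempty with rfl | hsne
  · simp
  rcases t.eq_empty_or_nonempty with rfl | htne
  · simp
  obtain ⟨a, rfl⟩ := hs.exists_eq_range hsne
  obtain ⟨b, rfl⟩ := ht.exists_eq_range htne
  have hfex : ∀ n, ∃ f : X → ℝ, Continuous f ∧ (∀ y, f y ∈ Icc (0:ℝ) 1) ∧ f (a n) = 1 ∧
      ∀ y ∈ closure (range b), f y = 0 :=
    fun n => my_sep isClosed_closure (disjoint_left.mp hst (mem_range_self n))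
  have hgex : ∀ n, ∃ g : X → ℝ, Continuous g ∧ (∀ y, g y ∈ Icc (0:ℝ) 1) ∧ g (b n) = 1 ∧
      ∀ y ∈ closure (range a), g y = 0 :=
    fun n => my_sep isClosed_closure (disjoint_left.mp hts (mem_range_self n))
  choose f fc fI fa fb using hfex
  choose g gc gI gb ga using hgex
  set A : Set X := {x | myPhi f g x ≠ 0} with hA
  set B : Set X := {x | myPhi g f x ≠ 0} with hB
  have hcozA : IsCozeroSet A := ⟨myPhi f g, myPhi_continuous fc gc fI gI, rfl⟩
  have hcozB : IsCozeroSet B := ⟨myPhi g f, myPhi_continuous gc fc gI fI, rfl⟩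
  have hdisjAB : Disjoint A B := by
    rw [disjoint_left]
    intro x hxA hxB
    obtain ⟨n, hn1, hn2⟩ := (myPhi_ne_zero_iff fI gI x).mp hxA
    obtain ⟨m, hm1, hm2⟩ := (myPhi_ne_zero_iff gI fI x).mp hxB
    rcases le_total n m with h | h
    · linarith [hm2 n h]
    · linarith [hn2 m h]
  have hsA : range a ⊆ A := by
    rintro _ ⟨k, rfl⟩
    rw [hA, mem_setOf_eq, myPhi_ne_zero_iff fI gI]
    refine ⟨k, by rw [fa k]; norm_num, fun m _ => ?_⟩
    rw [ga m (a k) (subset_closure (mem_range_self k))]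
    norm_num
  have htB : range b ⊆ B := by
    rintro _ ⟨k, rfl⟩
    rw [hB, mem_setOf_eq, myPhi_ne_zero_iff gI fI]
    refine ⟨k, by rw [gb k]; norm_num, fun m _ => ?_⟩
    rw [fb m (b k) (subset_closure (mem_range_self k))]
    norm_num
  exact (hF' A B hcozA hcozB hdisjAB).mono (closure_mono hsA) (closure_mono htB)

/-- Every countable subgroup (with the subspace topology) of a Hausdorff topological group
whose underlying Tychonoff space is an F'-space is extremally disconnected: any two disjoint
open subsets of it have disjoint closures. -/
theorem statement8 {G : Type u} [Group G] [TopologicalSpace G] [IsTopologicalGroup G]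
    [T2Space G] [CompletelyRegularSpace G] (hF' : IsFPrimeSpace G)
    (H : Subgroup G) (hH : (H : Set G).Countable) :
    ∀ s t : Set H, IsOpen s → IsOpen t → Disjoint s t →
      Disjoint (closure s) (closure t) := by
  intro s t hs ht hdisj
  have hs' : (Subtype.val '' s : Set G).Countable :=
    hH.mono (by rintro x ⟨y, _, rfl⟩; exact y.2)
  have ht' : (Subtype.val '' t : Set G).Countable :=
    hH.mono (by rintro x ⟨y, _, rfl⟩; exact y.2)
  have h1 : Disjoint (Subtype.val '' s) (closure (Subtype.val '' t)) := by
    rw [disjoint_left]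
    rintro _ ⟨y, hy, rfl⟩ hxc
    have hyt : y ∈ closure t := closure_subtype.mpr hxc
    exact disjoint_left.mp (hdisj.closure_right hs) hy hyt
  have h2 : Disjoint (Subtype.val '' t) (closure (Subtype.val '' s)) := by
    rw [disjoint_left]
    rintro _ ⟨y, hy, rfl⟩ hxc
    have hys : y ∈ closure s := closure_subtype.mpr hxc
    exact disjoint_left.mp (hdisj.symm.closure_right ht) hy hys
  have hkey := my_key hF' hs' ht' h1 h2
  rw [disjoint_left]
  intro x hxs hxt
  exact disjoint_left.mp hkey (closure_subtype.mp hxs) (closure_subtype.mp hxt)
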